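/- Let 𝕜 be an algebraically closed field of characteristic 0, k ≥ 2, and let A be the k×k matrix consisting of the Jordan block J_{λ₁,2} and diagonal part diag(λ₂,…,λ_{k-1}), where λ₁, …, λ_{k-1} are multiplicatively independent nonzero elements. Then the orbit of α = (1,…,1) under x ↦ A·x is Zariski dense in affine k-space. -/

import Mathlib

open Polynomial Finset
open scoped Classical

lemma poly_eq_zero_of_nat_roots {𝕜 : Type*} [Field 𝕜] [CharZero 𝕜] (p : 𝕜[X])
    (h : ∀ n : ℕ, p.eval (n : 𝕜) = 0) : p = 0 := by
  apply p.eq_zero_of_infinite_isRoot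
  exact Set.infinite_of_injective_forall_mem (f := fun n : ℕ => (n : 𝕜))
    Nat.cast_injective (fun n => h n)

lemma expPolyAux {𝕜 : Type*} [Field 𝕜] [CharZero 𝕜] {ι : Type*} [DecidableEq ι] :
    ∀ (N : ℕ) (s : Finset ι) (μ : ι → 𝕜) (p : ι → Polynomial 𝕜),
      (∑ i ∈ s, ((p i).natDegree + if p i = 0 then 0 else 1)) ≤ N →
      (∀ i ∈ s, μ i ≠ 0) →
      (∀ i ∈ s, ∀ j ∈ s, μ i = μ j → i = j) →
      (∀ n : ℕ, ∑ i ∈ s, (p i).eval (n : 𝕜) * μ i ^ n = 0) →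
      ∀ i ∈ s, p i = 0 := by
  intro N
  induction N with
  | zero =>
    intro s μ p hN _ _ _ i hi
    have h1 := Finset.sum_eq_zero_iff.mp (Nat.le_zero.mp hN) i hi
    by_contra hne
    simp [hne] at h1
  | succ N ih =>
    intro s μ p hN hμ0 hinj heq i hi
    by_cases hall : ∀ j ∈ s, p j = 0
    · exact hall i hi
    push_neg at hall
    obtain ⟨i₀, hi₀, hp₀⟩ := hall
    exfalso
    set p' : ι → 𝕜[X] := fun j => μ j • ((p j).comp (X + 1)) - μ i₀ • (p j) with hp'
    have hdegX1 : (X + (1:𝕜[X])).natDegree = 1 := by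
      simpa using Polynomial.natDegree_X_add_C (1 : 𝕜)
    have hcompdeg : ∀ j : ι, ((p j).comp (X + 1)).natDegree = (p j).natDegree := by
      intro j; rw [Polynomial.natDegree_comp, hdegX1, mul_one]
    have hcomplc : ∀ j : ι, ((p j).comp (X + 1)).leadingCoeff = (p j).leadingCoeff := by
      intro j
      rw [Polynomial.leadingCoeff_comp (by rw [hdegX1]; exact one_ne_zero)]
      have h1 : (X + (1:𝕜[X])).leadingCoeff = 1 := by
        simpa [Polynomial.Monic] using Polynomial.monic_X_add_C (1 : 𝕜)
      rw [h1, one_pow, mul_one]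
    have hzero : ∀ j : ι, p j = 0 → p' j = 0 := by
      intro j hj; simp [hp', hj]
    -- termwise bound
    have hterm : ∀ j ∈ s, (p' j).natDegree + (if p' j = 0 then 0 else 1)
        ≤ (p j).natDegree + (if p j = 0 then 0 else 1) := by
      intro j _
      by_cases hj : p j = 0
      · simp [hzero j hj, hj]
      by_cases hj' : p' j = 0
      · simp [hj', hj]
      have h1 : (p' j).natDegree ≤ (p j).natDegree := by
        apply le_trans (Polynomial.natDegree_sub_le _ _)
        apply max_le
        · exact le_trans (Polynomial.natDegree_smul_le _ _) (le_of_eq (hcompdeg j))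
        · exact Polynomial.natDegree_smul_le _ _
      simp only [if_neg hj, if_neg hj']
      omega
    -- strict bound at i₀
    have hterm0 : (p' i₀).natDegree + (if p' i₀ = 0 then 0 else 1) + 1
        ≤ (p i₀).natDegree + (if p i₀ = 0 then 0 else 1) := by
      rw [if_neg hp₀]
      by_cases hj' : p' i₀ = 0
      · simp [hj']
      rw [if_neg hj']
      have hsub : (p i₀).comp (X + 1) - p i₀ ≠ 0 := by
        intro h
        apply hj'
        have h2 : (p i₀).comp (X+1) = p i₀ := by
          have := sub_eq_zero.mp h; exact this
        simp [hp', h2, ← sub_smul]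
      have hdlt : ((p i₀).comp (X + 1) - p i₀).natDegree < (p i₀).natDegree := by
        apply Polynomial.natDegree_lt_natDegree hsub
        have hcompne : (p i₀).comp (X + 1) ≠ 0 := by
          intro h; apply hp₀
          have := hcomplc i₀
          rw [h] at this
          simp at this
          exact Polynomial.leadingCoeff_eq_zero.mp this.symm
        calc ((p i₀).comp (X + 1) - p i₀).degree
            < ((p i₀).comp (X+1)).degree := by
              apply Polynomial.degree_sub_lt _ hcompne (hcomplc i₀)
              rw [Polynomial.degree_eq_natDegree hcompne, Polynomial.degree_eq_natDegree hp₀,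
                hcompdeg i₀]
          _ = (p i₀).degree := by
              rw [Polynomial.degree_eq_natDegree hcompne, Polynomial.degree_eq_natDegree hp₀,
                hcompdeg i₀]
      have hsm : (p' i₀).natDegree ≤ ((p i₀).comp (X + 1) - p i₀).natDegree := by
        have : p' i₀ = μ i₀ • ((p i₀).comp (X + 1) - p i₀) := by
          simp [hp', smul_sub]
        rw [this]
        exact Polynomial.natDegree_smul_le _ _
      omega
    -- measure bound
    have hmeas : (∑ j ∈ s, ((p' j).natDegree + if p' j = 0 then 0 else 1)) ≤ N := by
      have h1 : (∑ j ∈ s, ((p' j).natDegree + if p' j = 0 then 0 else 1)) + 1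
          ≤ ∑ j ∈ s, ((p j).natDegree + if p j = 0 then 0 else 1) := by
        rw [← Finset.add_sum_erase s _ hi₀, ← Finset.add_sum_erase s _ hi₀]
        have h2 : ∑ j ∈ s.erase i₀, ((p' j).natDegree + if p' j = 0 then 0 else 1)
            ≤ ∑ j ∈ s.erase i₀, ((p j).natDegree + if p j = 0 then 0 else 1) :=
          Finset.sum_le_sum (fun j hj => hterm j (Finset.mem_of_mem_erase hj))
        omega
      omega
    -- functional equation for p'
    have heq' : ∀ n : ℕ, ∑ j ∈ s, (p' j).eval (n : 𝕜) * μ j ^ n = 0 := by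
      intro n
      have e1 := heq (n + 1)
      have e2 := heq n
      have : ∑ j ∈ s, (p' j).eval (n : 𝕜) * μ j ^ n
          = (∑ j ∈ s, (p j).eval ((n+1 : ℕ) : 𝕜) * μ j ^ (n+1))
            - μ i₀ * ∑ j ∈ s, (p j).eval (n : 𝕜) * μ j ^ n := by
        rw [Finset.mul_sum, ← Finset.sum_sub_distrib]
        apply Finset.sum_congr rfl
        intro j _
        simp only [hp', Polynomial.eval_sub, Polynomial.eval_smul, Polynomial.eval_comp,
          Polynomial.eval_add, Polynomial.eval_X, Polynomial.eval_one, smul_eq_mul]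
        push_cast
        ring
      rw [this, e1, e2]
      ring
    have hp'z := ih s μ p' hmeas hμ0 hinj heq'
    -- for j ≠ i₀ in s, p j = 0
    have hz : ∀ j ∈ s, j ≠ i₀ → p j = 0 := by
      intro j hj hne
      by_contra hpj
      have hμne : μ j - μ i₀ ≠ 0 := by
        intro h
        exact hne (hinj j hj i₀ hi₀ (sub_eq_zero.mp h))
      have hc : (p' j).coeff (p j).natDegree = (μ j - μ i₀) * (p j).leadingCoeff := by
        simp only [hp', Polynomial.coeff_sub, Polynomial.coeff_smul, smul_eq_mul]
        have c1 : ((p j).comp (X + 1)).coeff (p j).natDegree = (p j).leadingCoeff := by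
          rw [← hcompdeg j, Polynomial.coeff_natDegree, hcomplc j]
        rw [c1, Polynomial.coeff_natDegree]
        ring
      rw [hp'z j hj] at hc
      simp only [Polynomial.coeff_zero] at hc
      rcases mul_eq_zero.mp hc.symm with h | h
      · exact hμne h
      · exact hpj (Polynomial.leadingCoeff_eq_zero.mp h)
    -- so p i₀ itself is zero: contradiction
    apply hp₀
    apply poly_eq_zero_of_nat_roots
    intro n
    have h1 : ∑ j ∈ s, (p j).eval (n : 𝕜) * μ j ^ n = (p i₀).eval (n : 𝕜) * μ i₀ ^ n := by
      apply Finset.sum_eq_single_of_mem i₀ hi₀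
      intro b hb hbne
      rw [hz b hb hbne]
      simp
    rw [heq n] at h1
    have h2 : μ i₀ ^ n ≠ 0 := pow_ne_zero _ (hμ0 i₀ hi₀)
    field_simp at h1
    exact (mul_eq_zero.mp h1.symm).resolve_right h2


/-- the orbit vector -/
def vv {𝕜 : Type*} [Field 𝕜] {t : ℕ} (lam : Fin (t+1) → 𝕜) (n : ℕ) (i : Fin (t+2)) : 𝕜 :=
  if (i:ℕ) = 0 then lam 0 ^ n * (1 + n * (lam 0)⁻¹)
  else if (i:ℕ) = 1 then lam 0 ^ n
  else lam ⟨(i:ℕ)-1, by have : (i:ℕ) < t + 1 + 1 := i.isLt; omega⟩ ^ n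

/-- the key of a monomial -/
def kk {t : ℕ} (m : Fin (t+2) →₀ ℕ) (j : Fin (t+1)) : ℕ :=
  if (j:ℕ) = 0 then m 0 + m 1 else m ⟨(j:ℕ)+1, by have := j.isLt; omega⟩

section
variable {𝕜 : Type*} [Field 𝕜] {t : ℕ}

lemma mulVec_formula (lam : Fin (t + 1) → 𝕜)
    (A : Matrix (Fin (t + 2)) (Fin (t + 2)) 𝕜)
    (hA : ∀ i j : Fin (t + 2), A i j =
      if i = j then
        (if (i : ℕ) ≤ 1 then lam 0 else lam ⟨(i : ℕ) - 1, by have : (i:ℕ) < t + 1 + 1 := i.isLt; omega⟩)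
      else if (i : ℕ) = 0 ∧ (j : ℕ) = 1 then 1 else 0)
    (w : Fin (t+2) → 𝕜) (i : Fin (t+2)) :
    A.mulVec w i =
      (if (i : ℕ) ≤ 1 then lam 0 else lam ⟨(i : ℕ) - 1, by have : (i:ℕ) < t + 1 + 1 := i.isLt; omega⟩) * w i
        + (if (i:ℕ) = 0 then w 1 else 0) := by
  set d : Fin (t+2) → 𝕜 := fun i =>
    if (i : ℕ) ≤ 1 then lam 0 else lam ⟨(i : ℕ) - 1, by have : (i:ℕ) < t + 1 + 1 := i.isLt; omega⟩ with hd
  have key : ∀ j, A i j * w j =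
      (if i = j then d i * w j else 0) + (if (i:ℕ) = 0 ∧ (j:ℕ) = 1 then w j else 0) := by
    intro j
    rw [hA i j]
    by_cases h1 : i = j
    · have h2 : ¬ ((i:ℕ) = 0 ∧ (j:ℕ) = 1) := by
        rintro ⟨a, b⟩; rw [h1] at a; omega
      simp only [if_pos h1, if_neg h2, hd]
      ring
    · simp only [if_neg h1]
      by_cases h2 : (i:ℕ) = 0 ∧ (j:ℕ) = 1 <;> simp [h2]
  unfold Matrix.mulVec dotProduct
  simp only [key, Finset.sum_add_distrib]
  congr 1
  · rw [Finset.sum_ite_eq]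
    simp only [Finset.mem_univ, if_pos, hd]
  · by_cases h3 : (i:ℕ) = 0
    · simp only [h3, true_and, if_pos]
      have : ∀ j : Fin (t+2), ((j:ℕ) = 1) = (j = 1) := by
        intro j
        simp [Fin.ext_iff]
      simp only [this]
      rw [Finset.sum_ite_eq']
      simp
    · simp [h3]

lemma orbit_formula (lam : Fin (t + 1) → 𝕜) (h0 : lam 0 ≠ 0)
    (A : Matrix (Fin (t + 2)) (Fin (t + 2)) 𝕜)
    (hA : ∀ i j : Fin (t + 2), A i j =
      if i = j then
        (if (i : ℕ) ≤ 1 then lam 0 else lam ⟨(i : ℕ) - 1, by have : (i:ℕ) < t + 1 + 1 := i.isLt; omega⟩)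
      else if (i : ℕ) = 0 ∧ (j : ℕ) = 1 then 1 else 0) (n : ℕ) :
    (A ^ n).mulVec (fun _ => (1 : 𝕜)) = vv lam n := by
  induction n with
  | zero =>
    funext i
    simp only [pow_zero, Matrix.one_mulVec, vv]
    split_ifs <;> simp
  | succ n ihn =>
    have h1 : A ^ (n+1) = A * A ^ n := by rw [pow_succ']
    rw [h1, ← Matrix.mulVec_mulVec, ihn]
    funext i
    rw [mulVec_formula lam A hA]
    have hv1 : vv lam n 1 = lam 0 ^ n := by
      simp [vv, Fin.val_one]
    rcases Nat.lt_or_ge (i:ℕ) 2 with hlt | hge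
    · rcases Nat.lt_or_ge (i:ℕ) 1 with hlt0 | hge1
      · have hi0 : (i:ℕ) = 0 := by omega
        simp only [vv, hi0, Fin.val_one]
        norm_num
        field_simp
        ring
      · have hi1 : (i:ℕ) = 1 := by omega
        simp only [vv, hi1, Fin.val_one]
        norm_num
        ring
    · have h2 : ¬ (i:ℕ) = 0 := by omega
      have h3 : ¬ (i:ℕ) = 1 := by omega
      have h4 : ¬ (i:ℕ) ≤ 1 := by omega
      simp only [vv, if_neg h2, if_neg h3, if_neg h4, add_zero]
      ring
end

section
variable {𝕜 : Type*} [Field 𝕜] {t : ℕ}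

lemma monomial_formula (lam : Fin (t + 1) → 𝕜) (h0 : lam 0 ≠ 0)
    (m : Fin (t+2) →₀ ℕ) (n : ℕ) :
    ∏ i : Fin (t+2), (vv lam n i) ^ (m i)
      = (((1 : 𝕜[X]) + C (lam 0)⁻¹ * X) ^ (m 0)).eval (n : 𝕜)
        * (∏ j : Fin (t+1), lam j ^ kk m j) ^ n := by
  have e1 : ∏ i : Fin (t+2), (vv lam n i) ^ (m i)
      = (vv lam n 0) ^ (m 0) * ((vv lam n ((0 : Fin (t+1)).succ)) ^ (m ((0 : Fin (t+1)).succ))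
          * ∏ j : Fin t, (vv lam n (j.succ.succ)) ^ (m (j.succ.succ))) := by
    rw [Fin.prod_univ_succ (fun i : Fin (t+2) => (vv lam n i) ^ (m i)),
        Fin.prod_univ_succ (fun i : Fin (t+1) => (vv lam n i.succ) ^ (m i.succ))]
  have hsucc2 : ∀ j : Fin t, ((j.succ.succ : Fin (t+2)) : ℕ) = (j : ℕ) + 2 := by
    intro j; simp [Fin.val_succ]
  have hk0 : kk m 0 = m 0 + m 1 := by simp [kk]
  have hksucc : ∀ j : Fin t, kk m j.succ = m (j.succ.succ : Fin (t+2)) := by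
    intro j
    have h1 : ((j.succ : Fin (t+1)) : ℕ) ≠ 0 := by simp [Fin.val_succ]
    rw [kk, if_neg h1]
    congr 1
  have e2 : ∏ j : Fin (t+1), lam j ^ kk m j
      = lam 0 ^ (m 0 + m 1) * ∏ j : Fin t, lam j.succ ^ (m (j.succ.succ : Fin (t+2))) := by
    rw [Fin.prod_univ_succ (fun j : Fin (t+1) => lam j ^ kk m j), hk0]
    congr 1
  -- values of vv
  have hv0 : vv lam n 0 = lam 0 ^ n * (1 + n * (lam 0)⁻¹) := by
    simp [vv]
  have hv1 : vv lam n ((0 : Fin (t+1)).succ) = lam 0 ^ n := by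
    have : (((0 : Fin (t+1)).succ : Fin (t+2)) : ℕ) = 1 := by simp
    simp [vv, this]
  have hv2 : ∀ j : Fin t, vv lam n (j.succ.succ : Fin (t+2)) = lam j.succ ^ n := by
    intro j
    have h1 : ¬ ((j.succ.succ : Fin (t+2)) : ℕ) = 0 := by rw [hsucc2]; omega
    have h2 : ¬ ((j.succ.succ : Fin (t+2)) : ℕ) = 1 := by rw [hsucc2]; omega
    rw [vv, if_neg h1, if_neg h2]
    congr 2
  -- m at index 1
  have hm1 : m ((0 : Fin (t+1)).succ) = m 1 := by
    congr 1
  rw [e1, e2, hv0, hv1, hm1]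
  simp only [Polynomial.eval_pow, Polynomial.eval_add, Polynomial.eval_one,
    Polynomial.eval_mul, Polynomial.eval_C, Polynomial.eval_X]
  rw [mul_pow (lam 0 ^ (m 0 + m 1)), ← Finset.prod_pow]
  have e3 : ∏ j : Fin t, (lam j.succ ^ (m (j.succ.succ : Fin (t+2)))) ^ n
      = ∏ j : Fin t, (vv lam n (j.succ.succ : Fin (t+2))) ^ (m (j.succ.succ : Fin (t+2))) := by
    exact Finset.prod_congr rfl (fun j _ => by rw [hv2 j, pow_right_comm])
  rw [e3]
  rw [mul_pow (lam 0 ^ n)]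
  have e4 : (lam 0 ^ (m 0 + m 1)) ^ n = (lam 0 ^ n) ^ (m 0) * (lam 0 ^ n) ^ (m 1) := by
    rw [pow_right_comm, ← pow_add]
  rw [e4]
  ring
end

lemma fiber_inj {t : ℕ} (m m' : Fin (t+2) →₀ ℕ) (hk : kk m = kk m') (h00 : m 0 = m' 0) :
    m = m' := by
  ext i
  have hk0 := congrFun hk 0
  simp only [kk, Fin.val_zero, if_pos] at hk0
  rcases Nat.lt_or_ge (i:ℕ) 2 with hlt | hge
  · rcases Nat.lt_or_ge (i:ℕ) 1 with hlt0 | hge1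
    · have : i = 0 := by ext; simpa using (by omega : (i:ℕ) = 0)
      rw [this]; exact h00
    · have : i = 1 := by ext; simpa [Fin.val_one] using (by omega : (i:ℕ) = 1)
      rw [this]; omega
  · have hjlt : (i:ℕ) - 1 < t + 1 := by have := i.isLt; omega
    set j : Fin (t+1) := ⟨(i:ℕ) - 1, hjlt⟩ with hj
    have hkj := congrFun hk j
    have hjne : ((j : Fin (t+1)) : ℕ) ≠ 0 := by simp [hj]; omega
    simp only [kk, if_neg hjne] at hkj
    have hidx : (⟨(j:ℕ)+1, by have := j.isLt; omega⟩ : Fin (t+2)) = i := by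
      ext; simp [hj]; omega
    rwa [hidx] at hkj

set_option maxHeartbeats 1000000 in
/-- here `k = t+2 ≥ 2` and `lam : Fin (t+1) → 𝕜` lists the
multiplicatively independent nonzero eigenvalues `λ₁,…,λ_{k-1}`.
`A = J_{λ₁,2} ⊕ diag(λ₂,…,λ_{k-1})`. Then the orbit of `(1,…,1)` under `x ↦ A·x`
is Zariski dense in `𝔸^k`: no nonzero polynomial vanishes on the whole orbit. -/
theorem stmt10 {𝕜 : Type*} [Field 𝕜] [IsAlgClosed 𝕜] [CharZero 𝕜] {t : ℕ}
    (lam : Fin (t + 1) → 𝕜) (h0 : ∀ i, lam i ≠ 0)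
    (hindep : ∀ c : Fin (t + 1) → ℤ, ∏ i, lam i ^ c i = 1 → c = 0)
    (A : Matrix (Fin (t + 2)) (Fin (t + 2)) 𝕜)
    (hA : ∀ i j : Fin (t + 2), A i j =
      if i = j then
        (if (i : ℕ) ≤ 1 then lam 0 else lam ⟨(i : ℕ) - 1, by have := i.isLt; omega⟩)
      else if (i : ℕ) = 0 ∧ (j : ℕ) = 1 then 1 else 0)
    (F : MvPolynomial (Fin (t + 2)) 𝕜) (hF : F ≠ 0) :
    ∃ n : ℕ, MvPolynomial.eval ((A ^ n).mulVec (fun _ => (1 : 𝕜))) F ≠ 0 := by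
  by_contra hcon
  push_neg at hcon
  have hF2 : ∀ n : ℕ, MvPolynomial.eval (vv lam n) F = 0 := by
    intro n
    rw [← orbit_formula lam (h0 0) A hA n]
    exact hcon n
  set pm : (Fin (t+2) →₀ ℕ) → 𝕜[X] := fun m =>
    C (MvPolynomial.coeff m F) * ((1:𝕜[X]) + C (lam 0)⁻¹ * X) ^ (m 0) with hpm
  set μK : (Fin (t+1) → ℕ) → 𝕜 := fun K => ∏ j, lam j ^ K j with hμK
  set QK : (Fin (t+1) → ℕ) → 𝕜[X] := fun K =>
    ∑ m ∈ F.support.filter (fun m => kk m = K), pm m with hQK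
  have h1 : ∀ n : ℕ, ∑ m ∈ F.support, (pm m).eval (n:𝕜) * μK (kk m) ^ n = 0 := by
    intro n
    rw [← hF2 n, MvPolynomial.eval_eq']
    apply Finset.sum_congr rfl
    intro m _
    rw [monomial_formula lam (h0 0) m n, hpm, hμK]
    simp only [Polynomial.eval_mul, Polynomial.eval_C]
    ring
  have hgroup : ∀ n : ℕ, ∑ K ∈ F.support.image kk, (QK K).eval (n:𝕜) * μK K ^ n = 0 := by
    intro n
    rw [← h1 n, ← Finset.sum_fiberwise_of_maps_to
      (fun m hm => Finset.mem_image_of_mem kk hm)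
      (fun m => (pm m).eval (n:𝕜) * μK (kk m) ^ n)]
    apply Finset.sum_congr rfl
    intro K _
    rw [hQK]
    rw [Polynomial.eval_finset_sum, Finset.sum_mul]
    apply Finset.sum_congr rfl
    intro m hm
    rw [(Finset.mem_filter.mp hm).2]
  have hμ0 : ∀ K ∈ F.support.image kk, μK K ≠ 0 := by
    intro K _
    rw [hμK]
    rw [Finset.prod_ne_zero_iff]
    exact fun j _ => pow_ne_zero _ (h0 j)
  have hμinj : ∀ K ∈ F.support.image kk, ∀ K' ∈ F.support.image kk, μK K = μK K' → K = K' := by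
    intro K _ K' _ hKK'
    have hc : ∏ j : Fin (t+1), lam j ^ ((K j : ℤ) - (K' j : ℤ)) = 1 := by
      have e1 : ∀ j : Fin (t+1), lam j ^ ((K j : ℤ) - (K' j : ℤ))
          = lam j ^ (K j : ℤ) / lam j ^ (K' j : ℤ) := fun j => zpow_sub₀ (h0 j) _ _
      rw [Finset.prod_congr rfl (fun j _ => e1 j), Finset.prod_div_distrib]
      have e2 : ∀ (L : Fin (t+1) → ℕ), ∏ j : Fin (t+1), lam j ^ ((L j : ℕ) : ℤ) = μK L := by
        intro L
        rw [hμK]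
        exact Finset.prod_congr rfl (fun j _ => zpow_natCast _ _)
      rw [e2 K, e2 K', hKK']
      exact div_self (hμ0 K' ‹K' ∈ F.support.image kk›)
    have := hindep (fun j => (K j : ℤ) - (K' j : ℤ)) hc
    funext j
    have hj := congrFun this j
    simp only [Pi.zero_apply, sub_eq_zero] at hj
    exact_mod_cast hj
  have hQ0 : ∀ K ∈ F.support.image kk, QK K = 0 :=
    expPolyAux _ _ μK QK (le_refl _) hμ0 hμinj hgroup
  have hco : ∀ m ∈ F.support, MvPolynomial.coeff m F = 0 := by
    intro m hm
    have hq := hQ0 (kk m) (Finset.mem_image_of_mem kk hm)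
    set φ : 𝕜[X] := C (lam 0) * (X - 1) with hφ
    have hXcomp : (((1:𝕜[X]) + C (lam 0)⁻¹ * X)).comp φ = X := by
      rw [Polynomial.add_comp, Polynomial.one_comp, Polynomial.mul_comp,
        Polynomial.C_comp, Polynomial.X_comp, hφ, ← mul_assoc, ← Polynomial.C_mul,
        inv_mul_cancel₀ (h0 0), Polynomial.C_1, one_mul]
      ring
    have hcomp : (QK (kk m)).comp φ
        = ∑ m' ∈ F.support.filter (fun m' => kk m' = kk m),
            C (MvPolynomial.coeff m' F) * X ^ (m' 0) := by
      rw [hQK]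
      simp only [Polynomial.comp, Polynomial.eval₂_finset_sum]
      apply Finset.sum_congr rfl
      intro m' _
      have : (pm m').comp φ = C (MvPolynomial.coeff m' F) * X ^ (m' 0) := by
        rw [hpm]
        rw [Polynomial.mul_comp, Polynomial.C_comp, Polynomial.pow_comp, hXcomp]
      simpa [Polynomial.comp] using this
    have hcoeff : ((QK (kk m)).comp φ).coeff (m 0) = MvPolynomial.coeff m F := by
      rw [hcomp, Polynomial.finset_sum_coeff]
      have hothers : ∀ b ∈ F.support.filter (fun m' => kk m' = kk m), b ≠ m →
          (C (MvPolynomial.coeff b F) * X ^ (b 0)).coeff (m 0) = 0 := by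
        intro b hb hbne
        have hb2 := Finset.mem_filter.mp hb
        have hb0 : b 0 ≠ m 0 := fun h => hbne (fiber_inj b m hb2.2 h)
        simp [Polynomial.coeff_C_mul, Polynomial.coeff_X_pow, Ne.symm hb0]
      refine (Finset.sum_eq_single_of_mem
        (s := F.support.filter (fun m' => kk m' = kk m))
        (f := fun b => (C (MvPolynomial.coeff b F) * X ^ (b 0)).coeff (m 0))
        m (Finset.mem_filter.mpr ⟨hm, rfl⟩) hothers).trans ?_
      simp [Polynomial.coeff_C_mul, Polynomial.coeff_X_pow]
    rw [hq] at hcoeff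
    simpa using hcoeff.symm
  apply hF
  apply MvPolynomial.ext
  intro m
  by_cases hm : m ∈ F.support
  · simp [hco m hm]
  · rw [MvPolynomial.notMem_support_iff.mp hm]
    simp
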